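/- Under the bootstrap hypotheses |q| ≤ 1/2 pointwise, |R − 1| ≲ ε, |q(x,t)| ≲ ε ξ⁻¹ with ξ = (1+3x)^{1/3}, and ‖q(t)‖_{L²} ≲ ε, the radius function r(x,t) = (R(t)³ + 3x + 3∫₀ˣ q(y,t) dy)^{1/3} satisfies | r(x,t)²/ξ² − 1 | ≤ C ε ξ^{−3/2} for all x > 0, for a constant C independent of x, t, ε. -/

import Mathlib

open MeasureTheory Set

lemma pow23_abs_le {u : ℝ} (hu : 0 ≤ u) : |u ^ ((2:ℝ)/3) - 1| ≤ |u - 1| := by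
  set a := u ^ ((1:ℝ)/3) with ha
  have ha0 : 0 ≤ a := Real.rpow_nonneg hu _
  have h2 : u ^ ((2:ℝ)/3) = a ^ 2 := by
    rw [ha, ← Real.rpow_natCast (u ^ ((1:ℝ)/3)) 2, ← Real.rpow_mul hu]; norm_num
  have h3 : u = a ^ 3 := by
    rw [ha, ← Real.rpow_natCast (u ^ ((1:ℝ)/3)) 3, ← Real.rpow_mul hu]; norm_num
  rw [h2]
  nth_rewrite 1 [h3]
  rcases le_total a 1 with h | h
  · rw [abs_of_nonpos (by nlinarith), abs_of_nonpos (by nlinarith)]; nlinarith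
  · rw [abs_of_nonneg (by nlinarith), abs_of_nonneg (by nlinarith)]; nlinarith

lemma cube_abs_est {d m : ℝ} (h1 : -m ≤ d) (h2 : d ≤ m) (hm : m ≤ 1/2) :
    |d^3 + 3*d^2 + 3*d| ≤ (19/4)*m := by
  have hm0 : (0:ℝ) ≤ m := by linarith
  have hd2 : d^2 ≤ m^2 := by nlinarith [mul_nonneg (by linarith : (0:ℝ) ≤ m - d) (by linarith : (0:ℝ) ≤ m + d)]
  have hm2 : m^2 ≤ m/2 := by nlinarith [mul_nonneg hm0 (by linarith : (0:ℝ) ≤ 1/2 - m)]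
  have hd3u : d^3 ≤ m^3 := by
    nlinarith [mul_nonneg (by linarith : (0:ℝ) ≤ m - d) (sq_nonneg (m + d)),
      mul_nonneg (by linarith : (0:ℝ) ≤ m - d) (sq_nonneg m),
      mul_nonneg (by linarith : (0:ℝ) ≤ m - d) (sq_nonneg d)]
  have hd3l : -(m^3) ≤ d^3 := by
    nlinarith [mul_nonneg (by linarith : (0:ℝ) ≤ m + d) (sq_nonneg (m - d)),
      mul_nonneg (by linarith : (0:ℝ) ≤ m + d) (sq_nonneg m),
      mul_nonneg (by linarith : (0:ℝ) ≤ m + d) (sq_nonneg d)]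
  have hm3 : m^3 ≤ m/4 := by nlinarith [mul_nonneg hm0 hm0, hm2, mul_nonneg hm0 (by linarith : (0:ℝ) ≤ m/2 - m^2)]
  rw [abs_le]
  constructor
  · nlinarith [sq_nonneg d]
  · linarith

set_option maxHeartbeats 1000000 in
theorem radius_ratio_estimate (K : ℝ) (hK : 0 < K) :
    ∃ C > 0, ∀ (ε : ℝ) (q : ℝ → ℝ → ℝ) (R : ℝ → ℝ),
      0 < ε → K * ε ≤ 1/2 →
      (∀ t, Measurable (fun x => q x t)) →
      (∀ x t, |q x t| ≤ 1/2) →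
      (∀ t, |R t - 1| ≤ K * ε) →
      (∀ x t, 0 < x → |q x t| ≤ K * ε * (((1 + 3*x) ^ ((1:ℝ)/3)))⁻¹) →
      (∀ t, Integrable (fun x => (q x t)^2) (volume.restrict (Ioi 0))) →
      (∀ t, (∫ x in Ioi (0:ℝ), (q x t)^2) ≤ (K*ε)^2) →
      ∀ x t, 0 < x →
        |(((R t)^3 + 3*x + 3 * ∫ y in (0:ℝ)..x, q y t) ^ ((1:ℝ)/3))^2
            / ((1 + 3*x) ^ ((1:ℝ)/3))^2 - 1|
          ≤ C * ε * (((1 + 3*x) ^ ((1:ℝ)/3)) ^ (-(3:ℝ)/2)) := by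
  refine ⟨8*K, by positivity, ?_⟩
  intro ε q R hε hsm hmeas hq12 hR hdecay hint hL2 x t hx
  have hKε : 0 < K * ε := mul_pos hK hε
  have hb : (0:ℝ) < 1 + 3*x := by linarith
  set ξ : ℝ := (1 + 3*x) ^ ((1:ℝ)/3) with hξ
  have hξpos : 0 < ξ := Real.rpow_pos_of_pos hb _
  have hξ1 : 1 ≤ ξ := Real.one_le_rpow (by linarith) (by norm_num)
  have hξ3 : ξ ^ (3:ℕ) = 1 + 3*x := by
    rw [hξ, ← Real.rpow_natCast ((1+3*x) ^ ((1:ℝ)/3)) 3, ← Real.rpow_mul hb.le]; norm_num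
  -- integrability on Ioc 0 x
  have hIoc : IntegrableOn (fun y => q y t) (Ioc 0 x) := by
    refine Integrable.mono' (integrable_const (1/2 : ℝ)) ((hmeas t).aestronglyMeasurable) ?_
    filter_upwards with y
    rw [Real.norm_eq_abs]; exact hq12 y t
  have hIoi2 : IntegrableOn (fun y => (q y t)^2) (Ioi 0) := hint t
  have hIoc2 : IntegrableOn (fun y => (q y t)^2) (Ioc 0 x) :=
    hIoi2.mono_set Ioc_subset_Ioi_self
  have hq2le : (∫ y in Ioc 0 x, (q y t)^2) ≤ (K*ε)^2 := by
    refine le_trans (setIntegral_mono_set (hint t) ?_ ?_) (hL2 t)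
    · filter_upwards with y using sq_nonneg _
    · exact HasSubset.Subset.eventuallyLE Ioc_subset_Ioi_self
  -- Cauchy–Schwarz via AM–GM with s = √x/(Kε)
  set s : ℝ := Real.sqrt x / (K*ε) with hs_def
  have hsx : 0 < Real.sqrt x := Real.sqrt_pos.mpr hx
  have hs : 0 < s := div_pos hsx hKε
  have hxs : Real.sqrt x * Real.sqrt x = x := Real.mul_self_sqrt hx.le
  have hptw : ∀ y, |q y t| ≤ (s * (q y t)^2 + 1/s)/2 := by
    intro y
    have hm : |q y t|^2 = (q y t)^2 := sq_abs _
    have hkey : (s * (q y t)^2 + 1/s)/2 - |q y t| = (s * |q y t| - 1)^2 / (2*s) := by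
      rw [← hm]
      generalize |q y t| = m
      field_simp
      ring
    have h2 : (0:ℝ) ≤ (s * |q y t| - 1)^2 / (2*s) :=
      div_nonneg (sq_nonneg _) (by positivity)
    linarith [hkey ▸ h2]
  have habs : IntegrableOn (fun y => |q y t|) (Ioc 0 x) := hIoc.abs
  have hrhs : IntegrableOn (fun y => (s * (q y t)^2 + 1/s)/2) (Ioc 0 x) :=
    ((hIoc2.const_mul s).add (integrable_const _)).div_const 2
  have hI1 : |∫ y in Ioc 0 x, q y t| ≤ ∫ y in Ioc 0 x, |q y t| := by
    simpa [Real.norm_eq_abs] using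
      norm_integral_le_integral_norm (μ := volume.restrict (Ioc 0 x)) (fun y => q y t)
  have hI2 : (∫ y in Ioc 0 x, |q y t|) ≤ ∫ y in Ioc 0 x, (s * (q y t)^2 + 1/s)/2 :=
    setIntegral_mono habs hrhs hptw
  have hI3 : (∫ y in Ioc 0 x, (s * (q y t)^2 + 1/s)/2)
      = (s * (∫ y in Ioc 0 x, (q y t)^2) + x * (1/s))/2 := by
    rw [integral_div, integral_add (hIoc2.const_mul s) (integrable_const _),
      integral_const_mul, setIntegral_const]
    simp [Real.volume_Ioc, ENNReal.toReal_ofReal hx.le, smul_eq_mul, max_eq_left hx.le]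
  have hI4 : (s * (∫ y in Ioc 0 x, (q y t)^2) + x * (1/s))/2 ≤ K*ε*Real.sqrt x := by
    have h1 : s * (∫ y in Ioc 0 x, (q y t)^2) ≤ s * (K*ε)^2 := by
      exact mul_le_mul_of_nonneg_left hq2le hs.le
    have h2 : s * (K*ε)^2 = Real.sqrt x * (K*ε) := by
      rw [hs_def, div_mul_eq_mul_div, div_eq_iff hKε.ne']; ring
    have h3 : x * (1/s) = Real.sqrt x * (K*ε) := by
      rw [hs_def]; field_simp; nlinarith [hxs]
    rw [h3]; rw [h2] at h1; linarith
  have key : |∫ y in (0:ℝ)..x, q y t| ≤ K*ε*Real.sqrt x := by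
    rw [intervalIntegral.integral_of_le hx.le]
    calc |∫ y in Ioc 0 x, q y t| ≤ ∫ y in Ioc 0 x, |q y t| := hI1
      _ ≤ _ := hI2
      _ = _ := hI3
      _ ≤ _ := hI4
  -- crude bound for positivity of A
  have hIhalf : |∫ y in (0:ℝ)..x, q y t| ≤ x/2 := by
    rw [intervalIntegral.integral_of_le hx.le]
    refine le_trans hI1 (le_trans (setIntegral_mono habs (integrable_const _)
      (fun y => hq12 y t)) ?_)
    rw [setIntegral_const]
    simp [Real.volume_Ioc, ENNReal.toReal_ofReal hx.le, smul_eq_mul, max_eq_left hx.le]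
    linarith
  set I : ℝ := ∫ y in (0:ℝ)..x, q y t with hI
  set A : ℝ := (R t)^3 + 3*x + 3*I with hA
  have hRt : |R t - 1| ≤ 1/2 := le_trans (hR t) hsm
  have hR3 : |(R t)^3 - 1| ≤ (19/4) * (K*ε) := by
    have h := hR t
    rw [abs_le] at h
    have e : (R t)^3 - 1 = (R t - 1)^3 + 3*(R t - 1)^2 + 3*(R t - 1) := by ring
    rw [e]
    exact cube_abs_est h.1 h.2 hsm
  have hcube : (1:ℝ)/8 ≤ (R t)^3 := by
    rw [abs_le] at hRt
    have h12 : (1:ℝ)/2 ≤ R t := by linarith [hRt.1]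
    calc (1:ℝ)/8 = (1/2)^3 := by norm_num
      _ ≤ (R t)^3 := pow_le_pow_left₀ (by norm_num) h12 3
  have hA0 : (0:ℝ) ≤ A := by
    rw [abs_le] at hIhalf
    rw [hA]
    linarith [hIhalf.1, hcube]
  -- rewrite the LHS as (A/(1+3x))^(2/3)
  have e1 : (A ^ ((1:ℝ)/3))^(2:ℕ) = A ^ ((2:ℝ)/3) := by
    rw [← Real.rpow_natCast (A ^ ((1:ℝ)/3)) 2, ← Real.rpow_mul hA0]; norm_num
  have e2 : ξ^(2:ℕ) = (1+3*x) ^ ((2:ℝ)/3) := by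
    rw [hξ, ← Real.rpow_natCast ((1+3*x) ^ ((1:ℝ)/3)) 2, ← Real.rpow_mul hb.le]; norm_num
  have e3 : A ^ ((2:ℝ)/3) / (1+3*x) ^ ((2:ℝ)/3) = (A/(1+3*x)) ^ ((2:ℝ)/3) :=
    (Real.div_rpow hA0 hb.le _).symm
  -- bound |A/(1+3x) - 1|
  have hAsub : |A - (1+3*x)| ≤ (31/4) * (K*ε) * ξ ^ ((3:ℝ)/2) := by
    have hA' : A - (1+3*x) = ((R t)^3 - 1) + 3*I := by rw [hA]; ring
    have h32 : (1:ℝ) ≤ ξ ^ ((3:ℝ)/2) := Real.one_le_rpow hξ1 (by norm_num)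
    have hsq : Real.sqrt x ≤ ξ ^ ((3:ℝ)/2) := by
      have h1 : Real.sqrt x ≤ Real.sqrt (ξ^(3:ℕ)) :=
        Real.sqrt_le_sqrt (by rw [hξ3]; linarith)
      have h2 : Real.sqrt (ξ^(3:ℕ)) = ξ ^ ((3:ℝ)/2) := by
        rw [Real.sqrt_eq_rpow, ← Real.rpow_natCast ξ 3, ← Real.rpow_mul hξpos.le]
        norm_num
      rw [h2] at h1; exact h1
    calc |A - (1+3*x)| ≤ |(R t)^3 - 1| + 3*|I| := by
          rw [hA']
          refine le_trans (abs_add_le _ _) ?_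
          rw [abs_mul, abs_of_nonneg (by norm_num : (0:ℝ) ≤ 3)]
      _ ≤ (19/4)*(K*ε) + 3*(K*ε*Real.sqrt x) := by
          refine add_le_add hR3 ?_
          exact mul_le_mul_of_nonneg_left key (by norm_num)
      _ ≤ (19/4)*(K*ε)*ξ^((3:ℝ)/2) + 3*(K*ε)*ξ^((3:ℝ)/2) := by
          refine add_le_add ?_ ?_
          · nlinarith [h32, hKε]
          · nlinarith [hsq, hKε, hsx]
      _ = (31/4) * (K*ε) * ξ ^ ((3:ℝ)/2) := by ring
  have hfinal : |A/(1+3*x) - 1| ≤ (31/4) * (K*ε) * ξ ^ (-(3:ℝ)/2) := by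
    rw [div_sub_one hb.ne', abs_div, abs_of_pos hb]
    rw [div_le_iff₀ hb]
    calc |A - (1+3*x)| ≤ (31/4) * (K*ε) * ξ ^ ((3:ℝ)/2) := hAsub
      _ = (31/4) * (K*ε) * ξ ^ (-(3:ℝ)/2) * (1+3*x) := by
          rw [← hξ3, ← Real.rpow_natCast ξ 3,
            mul_assoc ((31:ℝ)/4*(K*ε)) (ξ ^ (-(3:ℝ)/2)), ← Real.rpow_add hξpos]
          norm_num
  rw [e1, e2, e3]
  calc |(A/(1+3*x)) ^ ((2:ℝ)/3) - 1| ≤ |A/(1+3*x) - 1| :=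
        pow23_abs_le (by positivity)
    _ ≤ (31/4) * (K*ε) * ξ ^ (-(3:ℝ)/2) := hfinal
    _ ≤ 8*K * ε * ξ ^ (-(3:ℝ)/2) := by
        have : (0:ℝ) < ξ ^ (-(3:ℝ)/2) := Real.rpow_pos_of_pos hξpos _
        nlinarith
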